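/- arXiv:2201.06407 — 4 statements merged into one kernel-verified Lean document; each statement's English description precedes it below -/
import Mathlib

section
/- Soundness of the robust chance-constraint reformulation (no distributional assumption): Let μ be a standardized probability measure on ℝ (mean 0, second moment 1), let m ∈ ℝ, s ≥ 0, γ ∈ (0, 1), and let ν be the pushforward of μ under the map x ↦ m + s·x. If y ≤ m − s·√((1−γ)/γ), then ν({z : z ≥ y}) ≥ 1 − γ, i.e., the chance constraint P(Z ≥ y) ≥ 1 − γ holds for the random variable Z = m + s·ξ. -/
open MeasureTheory

lemma cantelli_aux (μ : Measure ℝ) [IsProbabilityMeasure μ]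
    (hL2 : MemLp id 2 μ)
    (hmean : ∫ x, x ∂μ = 0) (hsq : ∫ x, x ^ 2 ∂μ = 1)
    (a : ℝ) (ha : 0 < a) :
    (μ {x : ℝ | x ≤ -a}).toReal ≤ 1 / (1 + a ^ 2) := by
  set u : ℝ := 1 / a with hu
  have hu0 : 0 < u := by positivity
  have hint_x : Integrable (fun x : ℝ => x) μ := hL2.integrable (by norm_num)
  have hint_sq : Integrable (fun x : ℝ => x ^ 2) μ := by
    have := hL2.integrable_sq
    simpa [id] using this
  have hintf : Integrable (fun x : ℝ => (u - x) ^ 2) μ := by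
    have h : (fun x : ℝ => (u - x) ^ 2) = fun x => u ^ 2 - 2 * u * x + x ^ 2 := by
      funext x; ring
    rw [h]
    exact ((integrable_const _).sub (hint_x.const_mul (2 * u))).add hint_sq
  have hS : MeasurableSet {x : ℝ | x ≤ -a} := measurableSet_Iic (a := -a)
  have hind : Integrable ({x : ℝ | x ≤ -a}.indicator fun _ => (u + a) ^ 2) μ :=
    (integrable_const _).indicator hS
  have hpt : ∀ x : ℝ, {x : ℝ | x ≤ -a}.indicator (fun _ => (u + a) ^ 2) x ≤ (u - x) ^ 2 := by
    intro x
    by_cases hx : x ≤ -a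
    · have hxm : x ∈ {x : ℝ | x ≤ -a} := hx
      simp only [Set.indicator_of_mem hxm]
      have h1 : u + a ≤ u - x := by linarith
      have h2 : 0 < u + a := by positivity
      nlinarith
    · have hxm : x ∉ {x : ℝ | x ≤ -a} := hx
      simp only [Set.indicator_of_notMem hxm]
      positivity
  have hmono : ∫ x, {x : ℝ | x ≤ -a}.indicator (fun _ => (u + a) ^ 2) x ∂μ
      ≤ ∫ x, (u - x) ^ 2 ∂μ := integral_mono hind hintf hpt
  have hleft : ∫ x, {x : ℝ | x ≤ -a}.indicator (fun _ => (u + a) ^ 2) x ∂μ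
      = (u + a) ^ 2 * (μ {x : ℝ | x ≤ -a}).toReal := by
    rw [integral_indicator_const _ hS]; simp [mul_comm, Measure.real]
  have hright : ∫ x, (u - x) ^ 2 ∂μ = u ^ 2 + 1 := by
    have h : (fun x : ℝ => (u - x) ^ 2) = fun x => u ^ 2 - 2 * u * x + x ^ 2 := by
      funext x; ring
    have e1 : ∫ x, (u ^ 2 - 2 * u * x + x ^ 2) ∂μ
        = (∫ x, (u ^ 2 - 2 * u * x) ∂μ) + ∫ x, x ^ 2 ∂μ :=
      integral_add ((integrable_const _).sub (hint_x.const_mul (2 * u))) hint_sq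
    have e2 : ∫ x, (u ^ 2 - 2 * u * x) ∂μ
        = (∫ _x, (u ^ 2 : ℝ) ∂μ) - ∫ x, 2 * u * x ∂μ :=
      integral_sub (integrable_const _) (hint_x.const_mul (2 * u))
    rw [h, e1, e2, integral_const, integral_const_mul, hsq, hmean]
    simp
  rw [hleft, hright] at hmono
  set t : ℝ := (μ {x : ℝ | x ≤ -a}).toReal with htdef
  have ht0 : 0 ≤ t := ENNReal.toReal_nonneg
  have ha2 : (0:ℝ) < a ^ 2 := by positivity
  have h1a : (0:ℝ) < 1 + a ^ 2 := by positivity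
  have hua : (u + a) ^ 2 = (1 + a ^ 2) ^ 2 / a ^ 2 := by
    rw [hu, div_add' _ _ _ ha.ne', div_pow]; ring
  have hu1 : u ^ 2 + 1 = (1 + a ^ 2) / a ^ 2 := by
    rw [hu, div_pow, one_pow, div_add_one (ne_of_gt ha2)]
  rw [hua, hu1, div_mul_eq_mul_div, div_le_div_iff₀ ha2 ha2] at hmono
  rw [le_div_iff₀ h1a]
  nlinarith [mul_pos h1a ha2, hmono]

/-- Soundness of the robust chance-constraint reformulation (no distributional
assumption): if `ξ ∼ μ` is standardized and `Z = m + s·ξ`, then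
`y ≤ m - s·√((1-γ)/γ)` implies `P(Z ≥ y) ≥ 1 - γ`. -/
theorem robust_reformulation_sound (μ : Measure ℝ) [IsProbabilityMeasure μ]
    (hL2 : MemLp id 2 μ)
    (hmean : ∫ x, x ∂μ = 0) (hsq : ∫ x, x ^ 2 ∂μ = 1)
    (m s γ : ℝ) (hs : 0 ≤ s) (hγ : γ ∈ Set.Ioo (0 : ℝ) 1)
    (ν : Measure ℝ) (hν : ν = μ.map (fun x => m + s * x))
    (y : ℝ) (hy : y ≤ m - s * Real.sqrt ((1 - γ) / γ)) :
    ENNReal.ofReal (1 - γ) ≤ ν {z : ℝ | y ≤ z} := by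
  obtain ⟨hγ0, hγ1⟩ := hγ
  have hmeas : Measurable (fun x : ℝ => m + s * x) :=
    measurable_const.add (measurable_id.const_mul s)
  have hSy : MeasurableSet {z : ℝ | y ≤ z} :=
    measurableSet_le measurable_const measurable_id
  have hνy : ν {z : ℝ | y ≤ z} = μ {x : ℝ | y ≤ m + s * x} := by
    rw [hν, Measure.map_apply hmeas hSy]
    rfl
  rw [hνy]
  set a : ℝ := Real.sqrt ((1 - γ) / γ) with hadef
  have hfrac : (0:ℝ) < (1 - γ) / γ := div_pos (by linarith) hγ0
  have ha0 : 0 < a := Real.sqrt_pos.mpr hfrac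
  have ha2 : a ^ 2 = (1 - γ) / γ := Real.sq_sqrt (le_of_lt hfrac)
  have hSlt : MeasurableSet {x : ℝ | m + s * x < y} :=
    measurableSet_lt hmeas measurable_const
  have hkey : μ {x : ℝ | m + s * x < y} ≤ ENNReal.ofReal γ := by
    rcases eq_or_lt_of_le hs with hs0 | hs0
    · subst hs0
      have hym : y ≤ m := by nlinarith
      have : {x : ℝ | m + 0 * x < y} = ∅ := by
        ext x; simp only [Set.mem_setOf_eq, Set.mem_empty_iff_false, iff_false, not_lt]
        linarith
      rw [this]; simp
    · have hsub : {x : ℝ | m + s * x < y} ⊆ {x : ℝ | x ≤ -a} := by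
        intro x hx
        simp only [Set.mem_setOf_eq] at hx ⊢
        have h1 : s * x < y - m := by linarith
        have h2 : y - m ≤ -(s * a) := by linarith
        nlinarith
      have hcant := cantelli_aux μ hL2 hmean hsq a ha0
      have h1a : 1 / (1 + a ^ 2) = γ := by
        rw [ha2]; field_simp; ring
      rw [h1a] at hcant
      calc μ {x : ℝ | m + s * x < y} ≤ μ {x : ℝ | x ≤ -a} := measure_mono hsub
        _ ≤ ENNReal.ofReal γ := by
            rw [← ENNReal.ofReal_toReal (measure_ne_top μ _)]
            exact ENNReal.ofReal_le_ofReal hcant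
  have hcompl : {x : ℝ | y ≤ m + s * x} = {x : ℝ | m + s * x < y}ᶜ := by
    ext x; simp [not_lt]
  rw [hcompl, measure_compl hSlt (measure_ne_top μ _), measure_univ]
  have hstep : (1 : ENNReal) - ENNReal.ofReal γ ≤ 1 - μ {x : ℝ | m + s * x < y} :=
    tsub_le_tsub_left hkey 1
  refine le_trans ?_ hstep
  rw [← ENNReal.ofReal_one, ← ENNReal.ofReal_sub _ (le_of_lt hγ0)]
end

section
/- Soundness of the robust chance-constraint reformulation (symmetric case): Let μ be a standardized probability measure on ℝ (mean 0, second moment 1) that is symmetric about 0, let m ∈ ℝ, s ≥ 0, γ ∈ (0, 1/2], and let ν be the pushforward of μ under the map x ↦ m + s·x. If y ≤ m − s·√(1/(2γ)), then ν({z : z ≥ y}) ≥ 1 − γ. -/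
open MeasureTheory

/-- Soundness of the robust chance-constraint reformulation (symmetric case): if
`ξ ∼ μ` is standardized and symmetric about 0 and `Z = m + s·ξ`, then
`y ≤ m - s·√(1/(2γ))` implies `P(Z ≥ y) ≥ 1 - γ` for `γ ∈ (0, 1/2]`. -/
theorem robust_reformulation_sound_symmetric (μ : Measure ℝ) [IsProbabilityMeasure μ]
    (hL2 : MemLp id 2 μ)
    (hmean : ∫ x, x ∂μ = 0) (hsq : ∫ x, x ^ 2 ∂μ = 1)
    (hsymm : μ.map (fun x : ℝ => -x) = μ)
    (m s γ : ℝ) (hs : 0 ≤ s) (hγ : γ ∈ Set.Ioc (0 : ℝ) (1 / 2))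
    (ν : Measure ℝ) (hν : ν = μ.map (fun x => m + s * x))
    (y : ℝ) (hy : y ≤ m - s * Real.sqrt (1 / (2 * γ))) :
    ENNReal.ofReal (1 - γ) ≤ ν {z : ℝ | y ≤ z} := by
  obtain ⟨hγ0, hγ2⟩ := hγ
  set t : ℝ := Real.sqrt (1 / (2 * γ)) with ht
  have h2γ : (0 : ℝ) < 2 * γ := by linarith
  have htpos : 0 < t := Real.sqrt_pos.2 (by positivity)
  have htsq : t ^ 2 = 1 / (2 * γ) := Real.sq_sqrt (by positivity)
  -- variance of id is 1
  have hvar : ProbabilityTheory.variance id μ = 1 := by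
    rw [ProbabilityTheory.variance_eq_sub hL2]
    have h1 : ∫ x, (id ^ 2) x ∂μ = ∫ x, x ^ 2 ∂μ := by
      apply integral_congr_ae; filter_upwards with x; simp
    simp only [id_eq]
    rw [h1, hsq, hmean]
    norm_num
  -- Chebyshev
  have hcheb : μ {x : ℝ | t ≤ |x|} ≤ ENNReal.ofReal (2 * γ) := by
    have h := ProbabilityTheory.meas_ge_le_variance_div_sq (μ := μ) hL2 htpos
    simp only [id_eq, hmean, sub_zero, hvar] at h
    calc μ {x : ℝ | t ≤ |x|} ≤ ENNReal.ofReal (1 / t ^ 2) := h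
      _ = ENNReal.ofReal (2 * γ) := by rw [htsq, one_div_one_div]
  -- symmetry: μ (Iic (-t)) = μ (Ici t)
  have hsymm' : μ (Set.Iic (-t)) = μ (Set.Ici t) := by
    conv_lhs => rw [← hsymm]
    rw [Measure.map_apply (measurable_neg : Measurable fun x : ℝ => -x) measurableSet_Iic]
    congr 1
    ext x
    simp only [Set.mem_preimage, Set.mem_Iic, Set.mem_Ici]
    constructor <;> intro h <;> linarith
  -- the two tails are disjoint subsets of {t ≤ |x|}
  have hdisj : Disjoint (Set.Iic (-t)) (Set.Ici t) := by
    rw [Set.disjoint_left]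
    intro x hx hx'
    simp only [Set.mem_Iic] at hx
    simp only [Set.mem_Ici] at hx'
    linarith
  have hsum : μ (Set.Iic (-t)) + μ (Set.Ici t) ≤ ENNReal.ofReal (2 * γ) := by
    refine le_trans ?_ hcheb
    rw [← measure_union hdisj measurableSet_Ici]
    apply measure_mono
    rintro x (hx | hx)
    · simp only [Set.mem_Iic] at hx
      simp only [Set.mem_setOf_eq]
      rw [abs_of_nonpos (by linarith)]; linarith
    · simp only [Set.mem_Ici] at hx
      exact le_trans hx (le_abs_self x)
  have htail : μ (Set.Iic (-t)) ≤ ENNReal.ofReal γ := by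
    rw [← ENNReal.mul_le_mul_iff_right (two_ne_zero) ENNReal.ofNat_ne_top]
    calc 2 * μ (Set.Iic (-t)) = μ (Set.Iic (-t)) + μ (Set.Iic (-t)) := two_mul _
      _ = μ (Set.Iic (-t)) + μ (Set.Ici t) := by rw [hsymm']
      _ ≤ ENNReal.ofReal (2 * γ) := hsum
      _ = 2 * ENNReal.ofReal γ := by
          rw [ENNReal.ofReal_mul (by norm_num)]; norm_num
  -- lower bound on μ (Ici (-t))
  have hlow : ENNReal.ofReal (1 - γ) ≤ μ (Set.Ici (-t)) := by
    have hc : μ (Set.Ici (-t)) = 1 - μ (Set.Iio (-t)) := by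
      have hset : Set.Ici (-t) = (Set.Iio (-t))ᶜ := by ext x; simp [not_lt]
      rw [hset, measure_compl measurableSet_Iio (measure_ne_top μ _), measure_univ]
    rw [hc]
    have h1 : μ (Set.Iio (-t)) ≤ ENNReal.ofReal γ :=
      le_trans (measure_mono Set.Iio_subset_Iic_self) htail
    calc ENNReal.ofReal (1 - γ) = ENNReal.ofReal 1 - ENNReal.ofReal γ :=
          ENNReal.ofReal_sub 1 hγ0.le
      _ = 1 - ENNReal.ofReal γ := by norm_num
      _ ≤ 1 - μ (Set.Iio (-t)) := tsub_le_tsub_left h1 1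
  -- transfer to ν
  show ENNReal.ofReal (1 - γ) ≤ ν (Set.Ici y)
  rw [hν, Measure.map_apply (by fun_prop : Measurable fun x : ℝ => m + s * x) measurableSet_Ici]
  refine le_trans hlow (measure_mono ?_)
  intro x hx
  simp only [Set.mem_Ici, Set.mem_preimage] at hx ⊢
  have : s * (-t) ≤ s * x := mul_le_mul_of_nonneg_left hx hs
  linarith
end

section
/- One-sided Gauss inequality for symmetric unimodal distributions (large deviations): Let μ be a standardized probability measure on ℝ (mean 0, second moment 1) that is symmetric about 0 (pushforward under negation equals μ) and unimodal with mode 0 (its CDF F(t) = μ((−∞, t]) is convex on (−∞, 0] and concave on [0, ∞)). Then for every real k with k ≥ 2/√3, μ({x : x ≥ k}) ≤ 2/(9k²). -/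
open MeasureTheory Set ENNReal

lemma gauss_tail_bound (μ : Measure ℝ) [IsProbabilityMeasure μ]
    (hconv : ConvexOn ℝ (Set.Ici (0:ℝ)) (fun s => (μ (Set.Ioi s)).toReal))
    (hI : ∫⁻ s in Set.Ioi (0:ℝ), μ (Set.Ioi s) * ENNReal.ofReal s ≤ ENNReal.ofReal (1/4))
    (t : ℝ) (ht : 0 < t) : μ (Set.Ioi t) ≤ ENNReal.ofReal (2/(9*t^2)) := by
  set G : ℝ → ℝ := fun s => (μ (Set.Ioi s)).toReal with hGdef
  have hGanti : ∀ a b : ℝ, a ≤ b → G b ≤ G a := fun a b hab =>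
    ENNReal.toReal_mono (measure_ne_top μ _) (measure_mono (Set.Ioi_subset_Ioi hab))
  have hGnn : ∀ s, 0 ≤ G s := fun s => ENNReal.toReal_nonneg
  have hμG : ∀ s, μ (Set.Ioi s) = ENNReal.ofReal (G s) := fun s =>
    (ENNReal.ofReal_toReal (measure_ne_top μ _)).symm
  set g := G t with hgdef
  rcases le_or_gt g 0 with hg | hg
  · rw [hμG t, ENNReal.ofReal_eq_zero.mpr hg]; exact zero_le
  -- subgradient construction
  set S : Set ℝ := (fun s => (G t - G s)/(t - s)) '' Set.Ico 0 t with hSdef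
  have hSne : S.Nonempty := ⟨_, ⟨0, ⟨le_refl 0, ht⟩, rfl⟩⟩
  have hSbdd : BddAbove S := by
    refine ⟨(G (t+1) - G t)/(t + 1 - t), ?_⟩
    rintro _ ⟨u, hu, rfl⟩
    exact hconv.slope_mono_adjacent hu.1 (by positivity : (0:ℝ) ≤ t + 1) hu.2 (by linarith)
  set m := sSup S with hmdef
  have hm_ge : ∀ s ∈ Set.Ico (0:ℝ) t, (G t - G s)/(t - s) ≤ m := fun s hs =>
    le_csSup hSbdd ⟨s, hs, rfl⟩
  have hm_le : ∀ s, t < s → m ≤ (G s - G t)/(s - t) := by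
    intro s hs
    refine csSup_le hSne ?_
    rintro _ ⟨u, hu, rfl⟩
    exact hconv.slope_mono_adjacent hu.1 (le_of_lt (ht.trans hs)) hu.2 hs
  have hsup : ∀ s : ℝ, 0 ≤ s → g + m * (s - t) ≤ G s := by
    intro s hs
    rcases lt_trichotomy s t with h | h | h
    · have h1 := hm_ge s ⟨hs, h⟩
      rw [div_le_iff₀ (by linarith : (0:ℝ) < t - s)] at h1
      nlinarith
    · subst h; simp [hgdef]
    · have h1 := hm_le s h
      rw [le_div_iff₀ (by linarith : (0:ℝ) < s - t)] at h1
      nlinarith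
  have hm0 : m ≤ 0 := by
    have h1 := hsup (t+1) (by positivity)
    have h2 := hGanti t (t+1) (by linarith)
    nlinarith
  rcases eq_or_lt_of_le hm0 with hm | hm
  · -- m = 0 : contradiction with finiteness of the integral
    exfalso
    have hmono : ∀ s ∈ Set.Ioi (1:ℝ), ENNReal.ofReal g ≤ μ (Set.Ioi s) * ENNReal.ofReal s := by
      intro s hs
      have h0 := hsup s (by linarith [Set.mem_Ioi.mp hs])
      rw [hm] at h0
      have h1 : g ≤ G s := by linarith
      calc ENNReal.ofReal g = ENNReal.ofReal g * 1 := (mul_one _).symm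
        _ ≤ μ (Set.Ioi s) * ENNReal.ofReal s := by
            refine mul_le_mul' ?_ ?_
            · rw [hμG s]; exact ENNReal.ofReal_le_ofReal h1
            · exact ENNReal.one_le_ofReal.mpr (le_of_lt (Set.mem_Ioi.mp hs))
    have hmeas : Measurable fun s : ℝ => μ (Set.Ioi s) * ENNReal.ofReal s := by
      have h1 : Antitone fun s : ℝ => μ (Set.Ioi s) := fun a b hab =>
        measure_mono (Set.Ioi_subset_Ioi hab)
      exact h1.measurable.mul (ENNReal.measurable_ofReal.comp measurable_id)
    have hbig : (⊤ : ℝ≥0∞) ≤ ∫⁻ s in Set.Ioi (1:ℝ), μ (Set.Ioi s) * ENNReal.ofReal s := by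
      have h2 : ∫⁻ _ in Set.Ioi (1:ℝ), ENNReal.ofReal g ∂(volume) ≤
          ∫⁻ s in Set.Ioi (1:ℝ), μ (Set.Ioi s) * ENNReal.ofReal s :=
        setLIntegral_mono hmeas hmono
      rwa [setLIntegral_const, Real.volume_Ioi,
        ENNReal.mul_top (by simpa using hg : ENNReal.ofReal g ≠ 0)] at h2
    have hle : ∫⁻ s in Set.Ioi (1:ℝ), μ (Set.Ioi s) * ENNReal.ofReal s ≤ ENNReal.ofReal (1/4) :=
      le_trans (lintegral_mono_set (Set.Ioi_subset_Ioi (by norm_num))) hI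
    exact absurd (top_le_iff.mp (le_trans hbig hle)) ENNReal.ofReal_ne_top
  -- m < 0
  · have hmne : m ≠ 0 := ne_of_lt hm
    obtain ⟨z, htz, hz0⟩ : ∃ z, t < z ∧ g + m * (z - t) = 0 := by
      refine ⟨t - g/m, ?_, by field_simp; ring⟩
      have h1 : g/m < 0 := div_neg_of_pos_of_neg hg hm
      linarith
    have hzpos : 0 < z := ht.trans htz
    have hline : ∀ s : ℝ, ENNReal.ofReal (s * (g + m * (s - t))) ≤ μ (Set.Ioi s) * ENNReal.ofReal s := by
      intro s
      rcases le_or_gt s 0 with hs | hs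
      · have hℓ : 0 ≤ g + m * (s - t) := by nlinarith
        rw [ENNReal.ofReal_eq_zero.mpr (mul_nonpos_of_nonpos_of_nonneg hs hℓ)]
        exact zero_le
      · rw [mul_comm s, ENNReal.ofReal_mul' (le_of_lt hs)]
        exact mul_le_mul' (by rw [hμG s]; exact ENNReal.ofReal_le_ofReal (hsup s hs.le)) le_rfl
    have hcomp : ∫⁻ s in Set.Ioo (0:ℝ) z, ENNReal.ofReal (s * (g + m * (s - t))) ≤
        ENNReal.ofReal (1/4) :=
      le_trans (le_trans (lintegral_mono hline) (lintegral_mono_set Set.Ioo_subset_Ioi_self)) hI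
    have hint : IntegrableOn (fun s => s * (g + m * (s - t))) (Set.Ioo (0:ℝ) z) :=
      ((Continuous.integrableOn_Icc (by fun_prop)).mono_set Set.Ioo_subset_Icc_self)
    have hnn : 0 ≤ᵐ[volume.restrict (Set.Ioo (0:ℝ) z)] fun s => s * (g + m * (s - t)) := by
      filter_upwards [ae_restrict_mem measurableSet_Ioo] with s hs
      have h1 : 0 ≤ g + m * (s - t) := by
        nlinarith [mul_nonneg (neg_nonneg.mpr hm.le) (sub_nonneg.mpr hs.2.le)]
      exact mul_nonneg hs.1.le h1
    have heq : ENNReal.ofReal (∫ s in Set.Ioo (0:ℝ) z, s * (g + m * (s - t))) =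
        ∫⁻ s in Set.Ioo (0:ℝ) z, ENNReal.ofReal (s * (g + m * (s - t))) :=
      ofReal_integral_eq_lintegral_ofReal hint hnn
    have hval : ∫ s in Set.Ioo (0:ℝ) z, s * (g + m * (s - t)) = (-m) * z^3/6 := by
      rw [← MeasureTheory.integral_Ioc_eq_integral_Ioo,
        ← intervalIntegral.integral_of_le hzpos.le]
      have hrew : ∀ s:ℝ, s * (g + m*(s-t)) = (g - m*t)*s + m*s^2 := fun s => by ring
      simp_rw [hrew]
      rw [intervalIntegral.integral_add ((by fun_prop : Continuous fun x:ℝ => (g - m*t)*x).intervalIntegrable _ _)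
        ((by fun_prop : Continuous fun x:ℝ => m*x^2).intervalIntegrable _ _),
        intervalIntegral.integral_const_mul, intervalIntegral.integral_const_mul,
        integral_id, integral_pow]
      norm_num
      linear_combination (z^2/2) * hz0
    rw [← heq, hval] at hcomp
    have hle14 : (-m) * z^3/6 ≤ 1/4 := (ENNReal.ofReal_le_ofReal_iff (by norm_num)).mp hcomp
    have hgz : g = (-m)*(z - t) := by linear_combination hz0
    have h27 : 27*t^2*(z-t) ≤ 4*z^3 := by
      nlinarith [mul_nonneg (sq_nonneg (2*z-3*t)) (by positivity : (0:ℝ) ≤ z + 3*t)]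
    have hfin : g ≤ 2/(9*t^2) := by
      have hA : (-m) * (27*t^2*(z-t)) ≤ (-m) * (4*z^3) :=
        mul_le_mul_of_nonneg_left h27 (by linarith)
      have hB : (-m) * (4*z^3) ≤ 6 := by linarith [hle14]
      rw [le_div_iff₀ (by positivity : (0:ℝ) < 9*t^2), hgz]
      linarith [hA, hB]
    rw [hμG t]
    exact ENNReal.ofReal_le_ofReal hfin

lemma gauss_integral_quarter (μ : Measure ℝ) [IsProbabilityMeasure μ]
    (hL2 : MemLp id 2 μ) (hsq : ∫ x, x ^ 2 ∂μ = 1)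
    (hsymm : μ.map (fun x : ℝ => -x) = μ) :
    ∫⁻ s in Set.Ioi (0:ℝ), μ (Set.Ioi s) * ENNReal.ofReal s ≤ ENNReal.ofReal (1/4) := by
  set A := ∫⁻ x, ENNReal.ofReal ((max x 0)^2/2) ∂μ with hA
  have hmeas : Measurable fun x : ℝ => ENNReal.ofReal ((max x 0)^2/2) :=
    ENNReal.measurable_ofReal.comp (((measurable_id.max measurable_const).pow_const 2).div_const 2)
  have hsym2 : ∫⁻ x, ENNReal.ofReal ((max (-x) 0)^2/2) ∂μ = A := by
    rw [hA]
    conv_rhs => rw [← hsymm]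
    rw [lintegral_map hmeas measurable_neg]
  have hsum : A + A = ENNReal.ofReal (1/2) := by
    calc A + A
        = ∫⁻ x, (ENNReal.ofReal ((max x 0)^2/2) + ENNReal.ofReal ((max (-x) 0)^2/2)) ∂μ := by
          rw [lintegral_add_left hmeas, hsym2]
      _ = ∫⁻ x, ENNReal.ofReal (x^2/2) ∂μ := by
          refine lintegral_congr fun x => ?_
          rw [← ENNReal.ofReal_add (by positivity) (by positivity)]
          congr 1
          rcases le_total x 0 with h | h
          · rw [max_eq_right h, max_eq_left (by linarith : (0:ℝ) ≤ -x)]; ring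
          · rw [max_eq_left h, max_eq_right (by linarith : -x ≤ (0:ℝ))]; ring
      _ = ENNReal.ofReal (1/2) := by
          rw [← ofReal_integral_eq_lintegral_ofReal]
          · rw [integral_div, hsq]
          · exact (hL2.integrable_sq).div_const 2
          · exact ae_of_all _ fun x => by positivity
  have lc := lintegral_comp_eq_lintegral_meas_lt_mul μ (f := fun x => max x 0) (g := fun t => t)
      (ae_of_all _ fun x => le_max_right _ _)
      ((measurable_id.max measurable_const).aemeasurable)
      (fun t _ => intervalIntegral.intervalIntegrable_id)
      ((ae_restrict_mem measurableSet_Ioi).mono fun t ht => le_of_lt ht)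
  have hrew : ∀ ω : ℝ, (∫ t in (0:ℝ)..(max ω 0), t) = (max ω 0)^2/2 := fun ω => by
    rw [integral_id]; ring
  simp_rw [hrew] at lc
  have hset : ∫⁻ s in Set.Ioi (0:ℝ), μ {a : ℝ | s < max a 0} * ENNReal.ofReal s
      = ∫⁻ s in Set.Ioi (0:ℝ), μ (Set.Ioi s) * ENNReal.ofReal s := by
    refine setLIntegral_congr_fun measurableSet_Ioi (fun s hs => ?_)
    have h1 : {a : ℝ | s < max a 0} = Set.Ioi s := by
      ext a
      simp only [Set.mem_setOf_eq, Set.mem_Ioi, lt_max_iff]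
      exact ⟨fun h => h.elim id fun h0 => absurd h0 (not_lt.mpr (le_of_lt hs)), Or.inl⟩
    rw [h1]
  rw [hset] at lc
  rw [← lc]
  have h2A : (2:ℝ≥0∞) * A = (2:ℝ≥0∞) * ENNReal.ofReal (1/4) := by
    rw [two_mul, hsum]
    rw [show ((2:ℝ≥0∞)) = ENNReal.ofReal 2 from (ENNReal.ofReal_ofNat 2).symm,
      ← ENNReal.ofReal_mul (by norm_num)]
    norm_num
  exact le_of_eq ((ENNReal.mul_right_inj (by norm_num) (by norm_num)).mp h2A)

/-- One-sided Gauss inequality for symmetric unimodal standardized distributions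
(large deviations): `μ {x | k ≤ x} ≤ 2/(9k²)` for every `k ≥ 2/√3`. -/
theorem one_sided_gauss_large (μ : Measure ℝ) [IsProbabilityMeasure μ]
    (hL2 : MemLp id 2 μ)
    (hmean : ∫ x, x ∂μ = 0) (hsq : ∫ x, x ^ 2 ∂μ = 1)
    (hsymm : μ.map (fun x : ℝ => -x) = μ)
    (hconvex : ConvexOn ℝ (Set.Iic (0 : ℝ)) (fun t : ℝ => (μ (Set.Iic t)).toReal))
    (hconcave : ConcaveOn ℝ (Set.Ici (0 : ℝ)) (fun t : ℝ => (μ (Set.Iic t)).toReal))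
    (k : ℝ) (hk : 2 / Real.sqrt 3 ≤ k) :
    μ {x : ℝ | k ≤ x} ≤ ENNReal.ofReal (2 / (9 * k ^ 2)) := by
  have hkpos : 0 < k := lt_of_lt_of_le (by positivity) hk
  have hconvG : ConvexOn ℝ (Set.Ici (0:ℝ)) (fun s : ℝ => (μ (Set.Ioi s)).toReal) := by
    have hfun : (fun s : ℝ => (μ (Set.Ioi s)).toReal)
        = fun s : ℝ => -(μ (Set.Iic s)).toReal + 1 := by
      funext s
      have h1 : μ (Set.Ioi s) = 1 - μ (Set.Iic s) := by
        have h2 := measure_compl (measurableSet_Iic : MeasurableSet (Set.Iic s)) (measure_ne_top μ _)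
        rwa [Set.compl_Iic, measure_univ] at h2
      rw [h1, ENNReal.toReal_sub_of_le prob_le_one ENNReal.one_ne_top]
      simp; ring
    rw [hfun]
    exact hconcave.neg.add_const 1
  have hI := gauss_integral_quarter μ hL2 hsq hsymm
  have htail : ∀ t : ℝ, 0 < t → μ (Set.Ioi t) ≤ ENNReal.ofReal (2/(9*t^2)) :=
    fun t ht => gauss_tail_bound μ hconvG hI t ht
  have hev : ∀ᶠ t in nhdsWithin k (Set.Iio k), μ {x : ℝ | k ≤ x} ≤ ENNReal.ofReal (2/(9*t^2)) := by
    filter_upwards [Ioo_mem_nhdsLT_of_mem (Set.mem_Ioc.mpr ⟨hkpos, le_refl k⟩)] with t ht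
    refine le_trans (measure_mono ?_) (htail t ht.1)
    intro x hx
    exact lt_of_lt_of_le ht.2 hx
  have htend : Filter.Tendsto (fun t : ℝ => ENNReal.ofReal (2/(9*t^2)))
      (nhdsWithin k (Set.Iio k)) (nhds (ENNReal.ofReal (2/(9*k^2)))) := by
    refine (ENNReal.continuous_ofReal.tendsto _).comp ?_
    refine Filter.Tendsto.mono_left ?_ nhdsWithin_le_nhds
    exact (ContinuousAt.div continuousAt_const (by fun_prop) (by positivity))
  exact ge_of_tendsto htend hev
end

section
/- Quantile bound for symmetric unimodal distributions, high-confidence regime: Let μ be a standardized probability measure on ℝ (mean 0, second moment 1) that is symmetric about 0 and unimodal with mode 0, and let γ ∈ (0, 1/6]. Then μ({x : x ≥ √(2/(9γ))}) ≤ γ; in other words, the (1−γ)-quantile of any standardized symmetric unimodal distribution is at most √(2/(9γ)). -/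
open MeasureTheory
open scoped ENNReal

lemma tail_lintegral_le (μ : Measure ℝ) [IsProbabilityMeasure μ]
    (hL2 : MemLp id 2 μ) (hsq : ∫ x, x ^ 2 ∂μ = 1)
    (hsymm : μ.map (fun x : ℝ => -x) = μ) :
    ∫⁻ s in Set.Ioi (0:ℝ), ENNReal.ofReal s * μ (Set.Ioi s) ≤ ENNReal.ofReal (1/4) := by
  -- layer cake for f = max x 0, g = 2t
  have f_nn : 0 ≤ᵐ[μ] (fun x : ℝ => max x 0) := Filter.Eventually.of_forall fun x => le_max_right _ _
  have f_mble : AEMeasurable (fun x : ℝ => max x 0) μ :=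
    (measurable_id.max measurable_const).aemeasurable
  have g_intble : ∀ t > (0:ℝ), IntervalIntegrable (fun t : ℝ => 2*t) volume 0 t := fun t _ =>
    (continuous_const.mul continuous_id).intervalIntegrable _ _
  have g_nn : ∀ᵐ t ∂(volume.restrict (Set.Ioi (0:ℝ))), 0 ≤ 2*t := by
    refine (ae_restrict_iff' measurableSet_Ioi).2 (Filter.Eventually.of_forall fun t ht => ?_)
    have : (0:ℝ) < t := ht
    linarith
  have layer := lintegral_comp_eq_lintegral_meas_le_mul μ f_nn f_mble g_intble g_nn
  -- LHS of layer is ∫⁻ ofReal ((max x 0)^2)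
  have hLHS : (fun ω : ℝ => ENNReal.ofReal (∫ t in (0:ℝ)..(max ω 0), 2*t))
      = fun ω : ℝ => ENNReal.ofReal ((max ω 0)^2) := by
    funext ω
    congr 1
    rw [intervalIntegral.integral_const_mul, integral_id]
    ring
  rw [hLHS] at layer
  -- integrability facts
  have h2 : Integrable (fun x : ℝ => x ^ 2) μ := by simpa using hL2.integrable_sq
  have hmono : ∀ x : ℝ, ‖(max x 0)^2‖ ≤ ‖x^2‖ := by
    intro x
    rcases le_total x 0 with h | h
    · simp [max_eq_right h, sq_abs, sq_nonneg]
    · simp [max_eq_left h]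
  have intg : Integrable (fun x : ℝ => (max x 0)^2) μ :=
    h2.mono ((continuous_id.max continuous_const).pow 2).aestronglyMeasurable
      (Filter.Eventually.of_forall hmono)
  have hmono' : ∀ x : ℝ, ‖(max (-x) 0)^2‖ ≤ ‖x^2‖ := by
    intro x
    rcases le_total x 0 with h | h
    · simp only [max_eq_left (by linarith : (0:ℝ) ≤ -x)]
      simp [sq_abs]
    · simp [max_eq_right (by linarith : -x ≤ (0:ℝ)), sq_nonneg]
  have intg_neg : Integrable (fun x : ℝ => (max (-x) 0)^2) μ :=
    h2.mono (((continuous_id.neg.max continuous_const)).pow 2).aestronglyMeasurable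
      (Filter.Eventually.of_forall hmono')
  -- symmetry: ∫ (max (-x) 0)^2 = ∫ (max x 0)^2
  have hneg : ∫ x, (max (-x) 0)^2 ∂μ = ∫ x, (max x 0)^2 ∂μ := by
    have hmap : ∫ y, (max y 0)^2 ∂(μ.map (fun x : ℝ => -x)) = ∫ x, (max (-x) 0)^2 ∂μ :=
      integral_map measurable_neg.aemeasurable
        (Continuous.aestronglyMeasurable (by continuity) : AEStronglyMeasurable (fun y : ℝ => (max y 0)^2) (μ.map (fun x : ℝ => -x)))
    rw [← hmap, hsymm]
  have hhalf : ∫ x, (max x 0)^2 ∂μ = 1/2 := by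
    have hsum : ∫ x, ((max x 0)^2 + (max (-x) 0)^2) ∂μ = 1 := by
      have hpt : ∀ x : ℝ, (max x 0)^2 + (max (-x) 0)^2 = x^2 := by
        intro x
        rcases le_total x 0 with h | h
        · rw [max_eq_right h, max_eq_left (by linarith : (0:ℝ) ≤ -x)]; ring
        · rw [max_eq_left h, max_eq_right (by linarith : -x ≤ (0:ℝ))]; ring
      simp only [hpt]
      exact hsq
    rw [integral_add intg intg_neg, hneg] at hsum
    linarith
  have hlin : ∫⁻ ω, ENNReal.ofReal ((max ω 0)^2) ∂μ = ENNReal.ofReal (1/2) := by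
    rw [← ofReal_integral_eq_lintegral_ofReal intg
      (Filter.Eventually.of_forall fun x => sq_nonneg _), hhalf]
  have meas_tail : Measurable fun s : ℝ => μ (Set.Ioi s) :=
    Antitone.measurable (fun a b hab => measure_mono (Set.Ioi_subset_Ioi hab))
  have h2I : (2:ℝ≥0∞) * (∫⁻ s in Set.Ioi (0:ℝ), ENNReal.ofReal s * μ (Set.Ioi s))
      = ∫⁻ s in Set.Ioi (0:ℝ), 2 * (ENNReal.ofReal s * μ (Set.Ioi s)) :=
    (lintegral_const_mul 2 ((ENNReal.measurable_ofReal.comp measurable_id).mul meas_tail)).symm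
  have hmono2 : ∫⁻ s in Set.Ioi (0:ℝ), 2 * (ENNReal.ofReal s * μ (Set.Ioi s))
      ≤ ∫⁻ t in Set.Ioi (0:ℝ), μ {a : ℝ | t ≤ max a 0} * ENNReal.ofReal (2*t) := by
    refine lintegral_mono_ae ((ae_restrict_iff' measurableSet_Ioi).2
      (Filter.Eventually.of_forall fun t ht => ?_))
    have htpos : (0:ℝ) < t := ht
    have hsub : Set.Ioi t ⊆ {a : ℝ | t ≤ max a 0} := fun a ha =>
      show t ≤ max a 0 from le_trans (le_of_lt ha) (le_max_left _ _)
    have h2t : ENNReal.ofReal (2*t) = 2 * ENNReal.ofReal t := by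
      rw [ENNReal.ofReal_mul (by norm_num)]
      norm_num
    calc 2 * (ENNReal.ofReal t * μ (Set.Ioi t)) = μ (Set.Ioi t) * (2 * ENNReal.ofReal t) := by ring
      _ ≤ μ {a : ℝ | t ≤ max a 0} * (2 * ENNReal.ofReal t) :=
        mul_le_mul_left (measure_mono hsub) _
      _ = μ {a : ℝ | t ≤ max a 0} * ENNReal.ofReal (2*t) := by rw [h2t]
  have hfinal : (2:ℝ≥0∞) * (∫⁻ s in Set.Ioi (0:ℝ), ENNReal.ofReal s * μ (Set.Ioi s))
      ≤ 2 * ENNReal.ofReal (1/4) := by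
    rw [h2I]
    have : (2:ℝ≥0∞) * ENNReal.ofReal (1/4) = ENNReal.ofReal (1/2) := by
      rw [← ENNReal.ofReal_ofNat, ← ENNReal.ofReal_mul (by norm_num)]
      norm_num
    rw [this, ← hlin, layer]
    exact hmono2
  exact (ENNReal.mul_le_mul_iff_right (two_ne_zero) (by norm_num)).1 hfinal


lemma exists_support_line {g : ℝ → ℝ} (hg : ConvexOn ℝ (Set.Ici (0:ℝ)) g)
    (hanti : ∀ ⦃a b : ℝ⦄, 0 ≤ a → a ≤ b → g b ≤ g a) {t : ℝ} (ht : 0 < t) :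
    ∃ m : ℝ, m ≤ 0 ∧ ∀ s : ℝ, 0 ≤ s → g t + m * (s - t) ≤ g s := by
  set S : Set ℝ := (fun s => (g t - g s) / (t - s)) '' Set.Ico 0 t with hS
  have hne : S.Nonempty := ⟨_, ⟨0, ⟨le_refl 0, ht⟩, rfl⟩⟩
  have hub : ∀ b : ℝ, t < b → ∀ y ∈ S, y ≤ (g b - g t) / (b - t) := by
    rintro b hb y ⟨u, hu, rfl⟩
    exact hg.slope_mono_adjacent (Set.mem_Ici.2 hu.1)
      (Set.mem_Ici.2 (le_trans ht.le hb.le)) hu.2 hb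
  have hbdd : BddAbove S := ⟨(g (t+1) - g t) / (t + 1 - t),
    fun y hy => hub (t+1) (by linarith) y hy⟩
  set m := sSup S with hm
  have hm_ub : ∀ b : ℝ, t < b → m ≤ (g b - g t)/(b - t) := fun b hb =>
    csSup_le hne (hub b hb)
  have hm0 : m ≤ 0 := by
    have h1 := hm_ub (t+1) (by linarith)
    have h2 : g (t+1) ≤ g t := hanti ht.le (by linarith)
    have h3 : t + 1 - t = 1 := by ring
    rw [h3, div_one] at h1
    linarith
  refine ⟨m, hm0, fun s hs => ?_⟩
  rcases lt_trichotomy s t with h | h | h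
  · have hle : (g t - g s)/(t - s) ≤ m := le_csSup hbdd ⟨s, ⟨hs, h⟩, rfl⟩
    have htspos : (0:ℝ) < t - s := by linarith
    rw [div_le_iff₀ htspos] at hle
    nlinarith
  · subst h; simp
  · have h1 := hm_ub s h
    have hstpos : (0:ℝ) < s - t := by linarith
    rw [le_div_iff₀ hstpos] at h1
    nlinarith

lemma line_integral_le (μ : Measure ℝ) [IsProbabilityMeasure μ]
    (hI : (∫⁻ s in Set.Ioi (0:ℝ), ENNReal.ofReal s * μ (Set.Ioi s)) ≤ ENNReal.ofReal (1/4))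
    {T c d : ℝ} (hT : 0 < T)
    (hle : ∀ s : ℝ, 0 ≤ s → c + d * s ≤ (μ (Set.Ioi s)).toReal)
    (hnn : ∀ s ∈ Set.Icc (0:ℝ) T, 0 ≤ c + d * s) :
    c * T^2 / 2 + d * T^3 / 3 ≤ 1/4 := by
  have hval : ∫ s in (0:ℝ)..T, s * (c + d * s) = c * T^2/2 + d * T^3/3 := by
    have hfn : ∀ s:ℝ, s * (c + d*s) = c * s + d * s^2 := fun s => by ring
    simp only [hfn]
    rw [intervalIntegral.integral_add (f := fun s : ℝ => c * s) (g := fun s : ℝ => d * s^2) (((continuous_const.mul continuous_id') : Continuous fun s : ℝ => c * s).intervalIntegrable _ _)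
      ((continuous_const.mul (continuous_pow 2)).intervalIntegrable _ _),
      intervalIntegral.integral_const_mul, intervalIntegral.integral_const_mul,
      integral_id, integral_pow]
    norm_num
    ring
  have hcont : Continuous (fun s : ℝ => s * (c + d*s)) := by continuity
  have hint : IntegrableOn (fun s : ℝ => s * (c + d*s)) (Set.Ioc 0 T) volume :=
    hcont.integrableOn_Ioc
  have hofReal : ENNReal.ofReal (∫ s in (0:ℝ)..T, s * (c + d*s))
      = ∫⁻ s in Set.Ioc (0:ℝ) T, ENNReal.ofReal (s * (c + d*s)) := by
    rw [intervalIntegral.integral_of_le hT.le]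
    exact ofReal_integral_eq_lintegral_ofReal hint ((ae_restrict_iff' measurableSet_Ioc).2
      (Filter.Eventually.of_forall fun s hs => mul_nonneg hs.1.le (hnn s ⟨hs.1.le, hs.2⟩)))
  have hmono : (∫⁻ s in Set.Ioc (0:ℝ) T, ENNReal.ofReal (s * (c + d*s)))
      ≤ ∫⁻ s in Set.Ioi (0:ℝ), ENNReal.ofReal s * μ (Set.Ioi s) := by
    calc (∫⁻ s in Set.Ioc (0:ℝ) T, ENNReal.ofReal (s * (c + d*s)))
        ≤ ∫⁻ s in Set.Ioc (0:ℝ) T, ENNReal.ofReal s * μ (Set.Ioi s) := by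
          refine lintegral_mono_ae ((ae_restrict_iff' measurableSet_Ioc).2
            (Filter.Eventually.of_forall fun s hs => ?_))
          rw [ENNReal.ofReal_mul hs.1.le]
          exact mul_le_mul_right (ENNReal.ofReal_le_of_le_toReal (hle s hs.1.le)) _
      _ ≤ ∫⁻ s in Set.Ioi (0:ℝ), ENNReal.ofReal s * μ (Set.Ioi s) :=
          lintegral_mono_set Set.Ioc_subset_Ioi_self
  have : ENNReal.ofReal (c * T^2/2 + d * T^3/3) ≤ ENNReal.ofReal (1/4) := by
    rw [← hval, hofReal]
    exact le_trans hmono hI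
  exact (ENNReal.ofReal_le_ofReal_iff (by norm_num)).1 this


theorem quantile_bound_aux (μ : Measure ℝ) [IsProbabilityMeasure μ]
    (hI : (∫⁻ s in Set.Ioi (0:ℝ), ENNReal.ofReal s * μ (Set.Ioi s)) ≤ ENNReal.ofReal (1/4))
    (hline : ∀ {T c d : ℝ}, 0 < T →
      (∀ s : ℝ, 0 ≤ s → c + d * s ≤ (μ (Set.Ioi s)).toReal) →
      (∀ s ∈ Set.Icc (0:ℝ) T, 0 ≤ c + d * s) →
      c * T^2 / 2 + d * T^3 / 3 ≤ 1/4)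
    (hsupp : ∀ {t : ℝ}, 0 < t → ∃ m : ℝ, m ≤ 0 ∧
      ∀ s : ℝ, 0 ≤ s → (μ (Set.Ioi t)).toReal + m * (s - t) ≤ (μ (Set.Ioi s)).toReal)
    (γ : ℝ) (hγ : γ ∈ Set.Ioc (0 : ℝ) (1 / 6)) :
    μ {x : ℝ | Real.sqrt (2 / (9 * γ)) ≤ x} ≤ ENNReal.ofReal γ := by
  obtain ⟨hγ0, hγ6⟩ := hγ
  -- key pointwise tail bound
  have key : ∀ t : ℝ, 0 < t → (μ (Set.Ioi t)).toReal ≤ 2 / (9 * t^2) := by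
    intro t ht
    by_contra hcon
    push_neg at hcon
    set p := (μ (Set.Ioi t)).toReal with hp
    have hppos : 0 < p := lt_trans (by positivity) hcon
    have hp2 : 2 < 9 * p * t^2 := by
      rw [div_lt_iff₀ (by positivity)] at hcon
      linarith
    obtain ⟨m, hm0, hms⟩ := hsupp ht
    have hms' : ∀ s : ℝ, 0 ≤ s → p + m * (s - t) ≤ (μ (Set.Ioi s)).toReal := by
      intro s hs
      have h1 := hms s hs
      rw [← hp] at h1
      exact h1
    rcases hm0.lt_or_eq with hm | hm
    · -- m < 0
      obtain ⟨T, hTdef⟩ : ∃ T : ℝ, T = t - p / m := ⟨_, rfl⟩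
      have hTt : t < T := by
        have : p / m < 0 := div_neg_of_pos_of_neg hppos hm
        rw [hTdef]; linarith
      have hTpos : 0 < T := lt_trans ht hTt
      have hmT : m * T = m * t - p := by
        rw [hTdef]
        field_simp [hm.ne]
      have hres := hline hTpos (c := p - m*t) (d := m)
        (fun s hs => by
          have h1 := hms' s hs
          nlinarith [h1])
        (fun s hs => by
          have h1 : 0 ≤ (-m) * (T - s) := mul_nonneg (by linarith) (by linarith [hs.2])
          nlinarith [hmT])
      -- hres : (p - m*t) * T^2/2 + m*T^3/3 ≤ 1/4
      have hgt : p = m * t - m * T := by linarith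
      have h3 : (p - m*t) * T^2 = -(m*T^3) := by rw [hgt]; ring
      have hres' : -(m * T^3) ≤ 3/2 := by linarith
      have hq : (0:ℝ) ≤ -m := by linarith
      have hfact : 27 * t^2 * (T - t) ≤ 4 * T^3 := by
        nlinarith [mul_nonneg (sq_nonneg (2*T - 3*t)) (by linarith : (0:ℝ) ≤ T + 3*t)]
      have h5 : (-m) * (27*t^2*(T-t)) ≤ (-m) * (4*T^3) := mul_le_mul_of_nonneg_left hfact hq
      have h6 : 9 * p * t^2 = ((-m) * (27*t^2*(T-t)))/3 := by rw [hgt]; ring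
      have h7 : ((-m) * (4*T^3))/3 ≤ 2 := by nlinarith [hres']
      linarith
    · -- m = 0
      set T := 1 / Real.sqrt p with hT
      have hTpos : 0 < T := by positivity
      have hres := hline hTpos (c := p) (d := 0)
        (fun s hs => by simpa [hm] using hms' s hs)
        (fun s _ => by simpa using hppos.le)
      have hT2 : T^2 = 1/p := by
        rw [hT, div_pow, one_pow, Real.sq_sqrt hppos.le]
      rw [hT2] at hres
      have : p * (1/p) = 1 := by field_simp
      nlinarith [hres, this]
  -- conclude with limiting argument
  have hset : {x : ℝ | Real.sqrt (2 / (9 * γ)) ≤ x} = Set.Ici (Real.sqrt (2 / (9 * γ))) := rfl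
  rw [hset]
  refine ENNReal.le_of_forall_pos_le_add fun ε hε _ => ?_
  have hεpos : (0:ℝ) < (ε:ℝ) := hε
  set s := Real.sqrt (2 / (9 * (γ + (ε:ℝ)))) with hs
  have hspos : 0 < s := Real.sqrt_pos.2 (by positivity)
  have hslt : s < Real.sqrt (2 / (9 * γ)) := by
    apply Real.sqrt_lt_sqrt (by positivity)
    apply div_lt_div_of_pos_left (by norm_num) (by positivity)
    nlinarith
  have hsub : Set.Ici (Real.sqrt (2 / (9 * γ))) ⊆ Set.Ioi s := fun x hx =>
    lt_of_lt_of_le hslt hx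
  have hs2 : s^2 = 2 / (9 * (γ + (ε:ℝ))) := Real.sq_sqrt (by positivity)
  have hgs : (μ (Set.Ioi s)).toReal ≤ γ + (ε:ℝ) := by
    have h1 := key s hspos
    have h2 : 2 / (9 * s^2) = γ + (ε:ℝ) := by
      rw [hs2]
      field_simp
    linarith
  calc μ (Set.Ici (Real.sqrt (2 / (9 * γ)))) ≤ μ (Set.Ioi s) := measure_mono hsub
    _ = ENNReal.ofReal ((μ (Set.Ioi s)).toReal) := (ENNReal.ofReal_toReal (measure_ne_top μ _)).symm
    _ ≤ ENNReal.ofReal (γ + (ε:ℝ)) := ENNReal.ofReal_le_ofReal hgs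
    _ = ENNReal.ofReal γ + ENNReal.ofReal (ε:ℝ) := ENNReal.ofReal_add hγ0.le hεpos.le
    _ = ENNReal.ofReal γ + ε := by rw [ENNReal.ofReal_coe_nnreal]


/-- Quantile bound for symmetric unimodal standardized distributions, high-confidence
regime: `μ {x | √(2/(9γ)) ≤ x} ≤ γ` for `γ ∈ (0, 1/6]`. -/
theorem symmetric_unimodal_quantile_bound_high (μ : Measure ℝ) [IsProbabilityMeasure μ]
    (hL2 : MemLp id 2 μ)
    (hmean : ∫ x, x ∂μ = 0) (hsq : ∫ x, x ^ 2 ∂μ = 1)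
    (hsymm : μ.map (fun x : ℝ => -x) = μ)
    (hconvex : ConvexOn ℝ (Set.Iic (0 : ℝ)) (fun t : ℝ => (μ (Set.Iic t)).toReal))
    (hconcave : ConcaveOn ℝ (Set.Ici (0 : ℝ)) (fun t : ℝ => (μ (Set.Iic t)).toReal))
    (γ : ℝ) (hγ : γ ∈ Set.Ioc (0 : ℝ) (1 / 6)) :
    μ {x : ℝ | Real.sqrt (2 / (9 * γ)) ≤ x} ≤ ENNReal.ofReal γ := by
  have hgeq : ∀ s : ℝ, (μ (Set.Ioi s)).toReal = -(μ (Set.Iic s)).toReal + 1 := by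
    intro s
    have h1 : μ (Set.Iic s) + μ (Set.Ioi s) = 1 := by
      have h := measure_add_measure_compl (μ := μ) (measurableSet_Iic (a := s))
      rwa [Set.compl_Iic, measure_univ] at h
    have h2 : (μ (Set.Iic s)).toReal + (μ (Set.Ioi s)).toReal = 1 := by
      rw [← ENNReal.toReal_add (measure_ne_top μ _) (measure_ne_top μ _), h1, ENNReal.toReal_one]
    linarith
  have hg : ConvexOn ℝ (Set.Ici (0:ℝ)) (fun s : ℝ => (μ (Set.Ioi s)).toReal) := by
    have h1 := hconcave.neg.add_const 1
    have h2 : ((-fun t : ℝ => (μ (Set.Iic t)).toReal) + fun _ => 1)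
        = fun s : ℝ => (μ (Set.Ioi s)).toReal := by
      funext s
      simp only [Pi.add_apply, Pi.neg_apply]
      rw [hgeq s]
    rwa [h2] at h1
  have hanti : ∀ ⦃a b : ℝ⦄, 0 ≤ a → a ≤ b →
      (μ (Set.Ioi b)).toReal ≤ (μ (Set.Ioi a)).toReal := fun a b _ hab =>
    ENNReal.toReal_mono (measure_ne_top μ _) (measure_mono (Set.Ioi_subset_Ioi hab))
  exact quantile_bound_aux μ (tail_lintegral_le μ hL2 hsq hsymm)
    (fun hT hle hnn => line_integral_le μ (tail_lintegral_le μ hL2 hsq hsymm) hT hle hnn)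
    (fun ht => exists_support_line hg hanti ht) γ hγ
end
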